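/- Let f be a concave function ℝ^r → ℝ, E ⊆ ℝ^r convex, x* a global maximizer of f with x* not in the closure of E, and let x₀ be a point of the closure of E minimizing the Euclidean distance to x*. If f is differentiable at x₀ and ∇f(x₀) ≠ 0, then ⟨∇f(x₀), x* − x₀⟩ > 0. -/

import Mathlib

open RealInnerProductSpace

lemma aux_grad_ineq {r : ℕ} {f : EuclideanSpace ℝ (Fin r) → ℝ}
    (hf : ConcaveOn ℝ Set.univ f) {x₀ y : EuclideanSpace ℝ (Fin r)}
    (hdiff : DifferentiableAt ℝ f x₀) :
    f y ≤ f x₀ + ⟪gradient f x₀, y - x₀⟫ := by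
  set v := y - x₀ with hv
  -- derivative of the line map
  have hc : HasDerivAt (fun t : ℝ => x₀ + t • v) v 0 := by
    simpa using ((hasDerivAt_id (0:ℝ)).smul_const v).const_add x₀
  have hgrad : HasGradientAt f (gradient f x₀) x₀ := hdiff.hasGradientAt
  have hF : HasFDerivAt f (InnerProductSpace.toDual ℝ _ (gradient f x₀)) x₀ := by
    rwa [hasGradientAt_iff_hasFDerivAt] at hgrad
  have hline : HasDerivAt (fun t : ℝ => f (x₀ + t • v)) ⟪gradient f x₀, v⟫ 0 := by
    have hF' : HasFDerivAt f (InnerProductSpace.toDual ℝ _ (gradient f x₀)) (x₀ + (0:ℝ) • v) := by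
      simpa using hF
    have := hF'.comp_hasDerivAt (x := (0:ℝ)) hc
    simpa [InnerProductSpace.toDual_apply_apply, Function.comp_def] using this
  -- slope inequality from concavity
  have hslope : ∀ t : ℝ, t ∈ Set.Ioc (0:ℝ) 1 →
      f y - f x₀ ≤ (f (x₀ + t • v) - f x₀) / t := by
    intro t ht
    have h1 : f (x₀ + t • v) ≥ (1 - t) * f x₀ + t * f y := by
      have := hf.2 (Set.mem_univ x₀) (Set.mem_univ y) (by linarith [ht.1, ht.2] : (0:ℝ) ≤ 1 - t)
        (le_of_lt ht.1) (by ring)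
      have heq : (1 - t) • x₀ + t • y = x₀ + t • v := by
        rw [hv]; module
      rw [heq] at this
      simpa using this
    rw [le_div_iff₀ ht.1]
    nlinarith [ht.1]
  -- pass to the limit
  have htend : Filter.Tendsto (fun t : ℝ => (f (x₀ + t • v) - f x₀) / t)
      (nhdsWithin 0 (Set.Ioi 0)) (nhds ⟪gradient f x₀, v⟫) := by
    have := hline.tendsto_slope_zero_right
    simpa [slope_def_field, div_eq_inv_mul] using this
  have hle : f y - f x₀ ≤ ⟪gradient f x₀, v⟫ := by
    refine ge_of_tendsto htend ?_
    filter_upwards [Ioc_mem_nhdsGT_of_mem (by norm_num : (0:ℝ) ∈ Set.Ico (0:ℝ) 1)] with t ht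
    exact hslope t ht
  linarith

theorem stmt_2 {r : ℕ} (f : EuclideanSpace ℝ (Fin r) → ℝ)
    (hf : ConcaveOn ℝ Set.univ f)
    (E : Set (EuclideanSpace ℝ (Fin r))) (hE : Convex ℝ E)
    (xstar x₀ : EuclideanSpace ℝ (Fin r))
    (hmax : ∀ y, f y ≤ f xstar)
    (hnot : xstar ∉ closure E)
    (hx₀ : x₀ ∈ closure E)
    (hmin : ∀ x ∈ closure E, ‖x₀ - xstar‖ ≤ ‖x - xstar‖)
    (hdiff : DifferentiableAt ℝ f x₀)
    (hne : gradient f x₀ ≠ 0) :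
    0 < ⟪gradient f x₀, xstar - x₀⟫ := by
  by_contra h
  push_neg at h
  have key := aux_grad_ineq hf hdiff (y := xstar)
  have hmax₀ : ∀ y, f y ≤ f x₀ := fun y => le_trans (hmax y) (by linarith)
  have hloc : IsLocalMax f x₀ := Filter.Eventually.of_forall hmax₀
  have : fderiv ℝ f x₀ = 0 := hloc.fderiv_eq_zero
  apply hne
  rw [gradient, this, map_zero]
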